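/- Suppose Φ(x, ·) is, for a fixed x, a positive Boolean combination of ordering literals over ℝ^m, with DNF disjuncts q_1, …, q_k. Suppose an algorithm returns the first satisfiable disjunct under an ordering of disjuncts in which every disjunct whose graph has i* := argmax(y) as a root precedes every disjunct whose graph does not. Then: if there exists y' with pairwise distinct entries satisfying Φ(x, ·) with argmax y' = i*, the returned disjunct q also admits a satisfying vector y'' with pairwise distinct entries and argmax y'' = i*. -/

import Mathlib

/-- A vector satisfies a conjunctive ordering constraint (a finite set of
literals `(i,j)` meaning `y i < y j`). -/
def SatC {m : ℕ} (q : Finset (Fin m × Fin m)) (y : Fin m → ℝ) : Prop :=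
  ∀ p ∈ q, y p.1 < y p.2

/-- The order graph of `q` (edge `i → j` iff `(j,i) ∈ q`) is acyclic. -/
def AcyclicC {m : ℕ} (q : Finset (Fin m × Fin m)) : Prop :=
  ∀ i : Fin m, ¬ Relation.TransGen (fun a b => (b, a) ∈ q) i i

/-- `i*` is a root of the order graph of `q` (no incoming edge). -/
def RootC {m : ℕ} (q : Finset (Fin m × Fin m)) (istar : Fin m) : Prop :=
  ∀ i : Fin m, (istar, i) ∉ q

/-- If the disjuncts are ordered so that every disjunct whose order graph has
`i* = argmax y` as a root precedes every disjunct whose graph does not, and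
the algorithm returns the first satisfiable disjunct `qs r`, then: whenever
some vector with distinct entries and argmax `i*` satisfies the DNF, the
returned disjunct also admits a satisfying vector with distinct entries and
argmax `i*`. -/
lemma exists_strict_mono_real {m : ℕ} (R : Fin m → Fin m → Prop)
    (h : ∀ i, ¬ Relation.TransGen R i i) :
    ∃ y : Fin m → ℝ, Function.Injective y ∧ ∀ a b, R a b → y a < y b := by
  classical
  set S : Fin m → Finset (Fin m) :=
    fun i => Finset.univ.filter (fun j => Relation.ReflTransGen R j i) with hS
  have hfrac : ∀ i : Fin m, 0 ≤ ((i : ℕ) : ℝ) / (m + 1) ∧ ((i : ℕ) : ℝ) / (m + 1) < 1 := by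
    intro i
    constructor
    · positivity
    · rw [div_lt_one (by positivity)]
      have h2 : ((i : ℕ) : ℝ) < m := by exact_mod_cast i.is_lt
      linarith
  have hmono : ∀ a b, R a b → (S a).card < (S b).card := by
    intro a b hab
    apply Finset.card_lt_card
    constructor
    · intro j hj
      simp only [hS, Finset.mem_filter, Finset.mem_univ, true_and] at hj ⊢
      exact hj.tail hab
    · intro hsub
      have hb : b ∈ S b := by
        simp only [hS, Finset.mem_filter, Finset.mem_univ, true_and]
        exact Relation.ReflTransGen.refl
      have hb' := hsub hb
      simp only [hS, Finset.mem_filter, Finset.mem_univ, true_and] at hb'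
      exact h b (Relation.TransGen.tail' hb' hab)
  set y : Fin m → ℝ := fun i => ((S i).card : ℝ) + ((i : ℕ) : ℝ) / (m + 1) with hy
  have hymono : ∀ a b, R a b → y a < y b := by
    intro a b hab
    have hc : ((S a).card : ℝ) + 1 ≤ ((S b).card : ℝ) := by
      exact_mod_cast hmono a b hab
    have := (hfrac a).2
    have := (hfrac b).1
    simp only [hy]
    linarith
  refine ⟨y, ?_, hymono⟩
  intro a b hab
  by_contra hne
  rcases lt_trichotomy ((S a).card) ((S b).card) with hlt | heq | hgt
  · have hc : ((S a).card : ℝ) + 1 ≤ ((S b).card : ℝ) := by exact_mod_cast hlt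
    have h1 := (hfrac a).2
    have h2 := (hfrac b).1
    simp only [hy] at hab
    linarith
  · have : ((a : ℕ) : ℝ) / (m + 1) = ((b : ℕ) : ℝ) / (m + 1) := by
      simp only [hy, heq] at hab
      linarith
    have hmn : (a : ℕ) = (b : ℕ) := by
      field_simp at this
      exact_mod_cast this
    exact hne (Fin.ext hmn)
  · have hc : ((S b).card : ℝ) + 1 ≤ ((S a).card : ℝ) := by exact_mod_cast hgt
    have h1 := (hfrac b).2
    have h2 := (hfrac a).1
    simp only [hy] at hab
    linarith

theorem stmt_16 (m k : ℕ) (qs : Fin k → Finset (Fin m × Fin m))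
    (hq : ∀ t, ∀ p ∈ qs t, p.1 ≠ p.2)
    (istar : Fin m)
    (horder : ∀ s t : Fin k, RootC (qs s) istar → ¬ RootC (qs t) istar → s < t)
    (r : Fin k) (hr : AcyclicC (qs r))
    (hfirst : ∀ s : Fin k, s < r → ¬ AcyclicC (qs s))
    (hsat : ∃ y' : Fin m → ℝ, Function.Injective y' ∧
      (∃ t : Fin k, SatC (qs t) y') ∧ ∀ j, j ≠ istar → y' j < y' istar) :
    ∃ y'' : Fin m → ℝ, Function.Injective y'' ∧ SatC (qs r) y'' ∧
      ∀ j, j ≠ istar → y'' j < y'' istar := by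
  obtain ⟨y, hyinj, ⟨t, hyt⟩, hymax⟩ := hsat
  -- the disjunct `t` is acyclic since it is satisfied by `y`
  have hacyc_t : AcyclicC (qs t) := by
    intro i hi
    have key : ∀ a b : Fin m, Relation.TransGen (fun a b => (b, a) ∈ qs t) a b → y b < y a := by
      intro a b hab
      induction hab with
      | single h' => exact hyt _ h'
      | tail _ h2 ih => exact lt_trans (hyt _ h2) ih
    exact lt_irrefl _ (key i i hi)
  -- `istar` is a root of `qs t`
  have hroot_t : RootC (qs t) istar := by
    intro i hi
    by_cases hcase : i = istar
    · exact hq t _ hi (by simp [hcase])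
    · exact absurd (hyt _ hi) (not_lt.2 (le_of_lt (hymax i hcase)))
  have hrt : r ≤ t := not_lt.1 (fun hlt => hfirst t hlt hacyc_t)
  have hrootr : RootC (qs r) istar := by
    by_contra hcon
    exact absurd (horder t r hroot_t hcon) (not_lt.2 hrt)
  -- augmented relation: edges of qs r plus an edge from everything into istar
  set S : Fin m → Fin m → Prop :=
    fun a b => (a, b) ∈ qs r ∨ (b = istar ∧ a ≠ istar) with hSdef
  have hnoout : ∀ x, ¬ S istar x := by
    intro x hx
    rcases hx with hx | hx
    · exact hrootr x hx
    · exact hx.2 rfl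
  have L : ∀ a b, Relation.TransGen S a b → b ≠ istar →
      Relation.TransGen (fun a b => (a, b) ∈ qs r) a b := by
    intro a b hab
    induction hab with
    | single h' =>
      intro hb
      exact Relation.TransGen.single (h'.resolve_right (fun hh => hb hh.1))
    | @tail b c h1 h2 ih =>
      intro hc
      have h2' : (b, c) ∈ qs r := h2.resolve_right (fun hh => hc hh.1)
      have hb : b ≠ istar := fun hb => hrootr c (hb ▸ h2')
      exact (ih hb).tail h2'
  have hirr : ∀ i, ¬ Relation.TransGen S i i := by
    intro i hi
    by_cases hi' : i = istar
    · subst hi'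
      obtain ⟨c, hc, -⟩ := Relation.TransGen.head'_iff.mp hi
      exact hnoout _ hc
    · have hQ := L i i hi hi'
      have : Relation.TransGen (fun a b => (b, a) ∈ qs r) i i := by
        have := Relation.TransGen.swap i i hQ
        exact this
      exact hr i this
  obtain ⟨y'', hinj, hmono⟩ := exists_strict_mono_real S hirr
  refine ⟨y'', hinj, ?_, ?_⟩
  · intro p hp
    exact hmono p.1 p.2 (Or.inl hp)
  · intro j hj
    exact hmono j istar (Or.inr ⟨rfl, hj⟩)
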